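/- For every real number q with 1/2 < q < 1 and every real μ with 0 < μ < q, there exists an odd positive integer K such that lb_K(q) < μ < ub_K(q), where lb_K(q) := 1 - T_K(q), ub_K(q) := q²(1 - T_K(q)) / (q²(1 - T_K(q)) + (1-q)² T_K(q)), and T_K(q) := ∑_{y=(K+1)/2}^{K} C(K,y) q^y (1-q)^{K-y}. (Equivalently: an incentive-compatible single-batch voting mechanism exists whenever μ < q.) -/

import Mathlib

open Finset Filter

/-- Tail of a Binomial(K,q): probability of at least (K+1)/2 successes. -/
noncomputable def binTail (q : ℝ) (K : ℕ) : ℝ :=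
  ∑ y ∈ Finset.Icc ((K + 1) / 2) K, (K.choose y : ℝ) * q ^ y * (1 - q) ^ (K - y)

/-- Lower endpoint of the incentive-compatible prior interval for batch size K. -/
noncomputable def lb (q : ℝ) (K : ℕ) : ℝ := 1 - binTail q K

/-- Upper endpoint of the incentive-compatible prior interval for batch size K. -/
noncomputable def ub (q : ℝ) (K : ℕ) : ℝ :=
  q ^ 2 * (1 - binTail q K) /
    (q ^ 2 * (1 - binTail q K) + (1 - q) ^ 2 * binTail q K)

/-- Partial sum of the Binomial(n,q) distribution: probability of at most j successes. -/
noncomputable def Spart (q : ℝ) (n j : ℕ) : ℝ :=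
  ∑ y ∈ Finset.range (j+1), (n.choose y : ℝ) * q ^ y * (1 - q) ^ (n - y)

lemma Spart_nonneg {q : ℝ} (hq0 : 0 < q) (hq1 : q < 1) (n j : ℕ) : 0 ≤ Spart q n j := by
  refine Finset.sum_nonneg (fun y _ => ?_)
  have : (0:ℝ) < 1 - q := by linarith
  positivity

lemma binTail_nonneg {q : ℝ} (hq0 : 0 < q) (hq1 : q < 1) (K : ℕ) : 0 ≤ binTail q K := by
  refine Finset.sum_nonneg (fun y _ => ?_)
  have : (0:ℝ) < 1 - q := by linarith
  positivity

lemma Spart_total {q : ℝ} (n : ℕ) : Spart q n n = 1 := by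
  have h := add_pow q (1-q) n
  simp only [add_sub_cancel, one_pow] at h
  unfold Spart
  rw [Finset.sum_congr rfl (fun y (_ : y ∈ Finset.range (n+1)) =>
    show (n.choose y : ℝ) * q ^ y * (1-q) ^ (n-y) = q ^ y * (1-q) ^ (n-y) * (n.choose y : ℝ) by ring)]
  exact h.symm

lemma binTail_compl {q : ℝ} (m : ℕ) : Spart q (2*m+1) m + binTail q (2*m+1) = 1 := by
  have h2 : (2*m+1+1)/2 = m+1 := by omega
  unfold binTail Spart
  rw [h2, Finset.range_eq_Ico,
      show Finset.Icc (m+1) (2*m+1) = Finset.Ico (m+1) (2*m+2) by rw [show 2*m+2 = 2*m+1+1 by ring, Finset.Ico_add_one_right_eq_Icc],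
      Finset.sum_Ico_consecutive _ (by omega : 0 ≤ m+1) (by omega : m+1 ≤ 2*m+2)]
  have := Spart_total (q := q) (2*m+1)
  unfold Spart at this
  rw [Finset.range_eq_Ico] at this
  exact this

lemma Spart_step (q : ℝ) {n j : ℕ} (h : j + 1 ≤ n) :
    Spart q (n+1) (j+1) = (1-q) * Spart q n (j+1) + q * Spart q n j := by
  unfold Spart
  rw [Finset.sum_range_succ' (fun y => (((n+1).choose y : ℝ)) * q ^ y * (1-q) ^ (n+1-y)) (j+1),
      Finset.sum_range_succ' (fun y => ((n.choose y : ℝ)) * q ^ y * (1-q) ^ (n-y)) (j+1),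
      Finset.mul_sum, mul_add, Finset.mul_sum, add_right_comm, ← Finset.sum_add_distrib]
  congr 1
  · refine Finset.sum_congr rfl (fun i hi => ?_)
    have hi' : i + 1 ≤ n := by
      have := Finset.mem_range.mp hi; omega
    have e1 : n + 1 - (i+1) = n - i := by omega
    have e2 : n - i = (n - (i+1)) + 1 := by omega
    have e3 : ((n+1).choose (i+1) : ℝ) = (n.choose i : ℝ) + (n.choose (i+1) : ℝ) := by
      rw [Nat.choose_succ_succ]; push_cast; ring
    rw [e1, e3, e2, pow_succ]
    ring
  · simp [pow_succ]
    ring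

lemma Spart_succ (q : ℝ) (n j : ℕ) :
    Spart q n (j+1) = Spart q n j + (n.choose (j+1) : ℝ) * q ^ (j+1) * (1-q) ^ (n-(j+1)) := by
  unfold Spart
  rw [Finset.sum_range_succ]

lemma stepB {q : ℝ} (hq : 1/2 < q) (hq1 : q < 1) (m : ℕ) :
    (1-q) * Spart q (2*m+1) m < q * Spart q (2*(m+1)+1) (m+1) := by
  have hq0 : (0:ℝ) < q := by linarith
  have hp0 : (0:ℝ) < 1 - q := by linarith
  cases m with
  | zero =>
    simp only [Spart, Finset.sum_range_succ, Finset.sum_range_zero]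
    norm_num
    nlinarith [mul_pos (mul_pos hp0 hp0) (show (0:ℝ) < (2*q-1)*(q+1) by nlinarith)]
  | succ k =>
    have e1 : Spart q (2*(k+2)+1) (k+2)
        = (1-q) * Spart q (2*k+4) (k+2) + q * Spart q (2*k+4) (k+1) := by
      have := Spart_step q (n := 2*k+4) (j := k+1) (by omega)
      convert this using 3
      omega
    have e2 : Spart q (2*k+4) (k+2)
        = (1-q) * Spart q (2*k+3) (k+2) + q * Spart q (2*k+3) (k+1) := by
      have := Spart_step q (n := 2*k+3) (j := k+1) (by omega)
      convert this using 3
    have e3 : Spart q (2*k+4) (k+1)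
        = (1-q) * Spart q (2*k+3) (k+1) + q * Spart q (2*k+3) k := by
      have := Spart_step q (n := 2*k+3) (j := k) (by omega)
      convert this using 3
    set F : ℝ := Spart q (2*k+3) (k+1) with hF
    set c : ℝ := ((2*k+3).choose (k+2) : ℝ) with hc
    have hsym : ((2*k+3).choose (k+1) : ℝ) = c := by
      rw [hc]
      norm_cast
      rw [show k+1 = 2*k+3-(k+2) by omega]
      exact Nat.choose_symm (by omega)
    have hF2 : Spart q (2*k+3) (k+2) = F + c * (q^(k+1) * q) * (1-q)^(k+1) := by
      rw [show k+2 = (k+1)+1 from rfl, Spart_succ, show 2*k+3-(k+1+1) = k+1 by omega,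
          ← hF, ← hc, pow_succ]
    have hF0 : F = Spart q (2*k+3) k + c * q^(k+1) * ((1-q)^(k+1) * (1-q)) := by
      rw [hF, Spart_succ, show 2*k+3-(k+1) = k+2 by omega, hsym]
      ring
    have hS0 : 0 ≤ Spart q (2*k+3) k := Spart_nonneg hq0 hq1 _ _
    have hA : (0:ℝ) < q^(k+1) := pow_pos hq0 _
    have hB : (0:ℝ) < (1-q)^(k+1) := pow_pos hp0 _
    have hcpos : (0:ℝ) < c := by
      rw [hc]; exact_mod_cast Nat.cast_pos.mpr (Nat.choose_pos (by omega))
    have hgoal : (1-q) * F < q * Spart q (2*(k+2)+1) (k+2) := by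
      rw [e1, e2, e3, hF2, hF0]
      have hcAB : (0:ℝ) < c * q^(k+1) * (1-q)^(k+1) := by positivity
      nlinarith [mul_pos (mul_pos hcAB hp0) (show (0:ℝ) < 1 - q^2 by nlinarith),
        mul_pos hcAB hp0, mul_pos hq0 hp0,
        mul_nonneg (mul_nonneg hS0 hq0.le) hp0.le,
        mul_nonneg hS0 (mul_pos hq0 hp0).le]
    have i1 : 2*(k+1)+1 = 2*k+3 := by omega
    have i2 : 2*(k+1+1)+1 = 2*(k+2)+1 := by omega
    rw [i1, i2]
    exact hgoal

lemma Spart_bound {q : ℝ} (hq : 1/2 < q) (hq1 : q < 1) (m : ℕ) :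
    Spart q (2*m+1) m ≤ (4*q*(1-q))^m := by
  have hq0 : (0:ℝ) < q := by linarith
  have hp0 : (0:ℝ) < 1 - q := by linarith
  have step1 : Spart q (2*m+1) m
      ≤ ∑ y ∈ Finset.range (m+1), ((2*m+1).choose y : ℝ) * (q^m * (1-q)^(m+1)) := by
    refine Finset.sum_le_sum fun y hy => ?_
    have hy' : y ≤ m := by have := Finset.mem_range.mp hy; omega
    have h1 : (1-q)^(m-y) ≤ q^(m-y) := pow_le_pow_left₀ hp0.le (by linarith) _
    have e : q^y * (1-q)^(2*m+1-y) = (q^y * (1-q)^(m-y)) * (1-q)^(m+1) := by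
      rw [show 2*m+1-y = (m-y)+(m+1) by omega, pow_add]; ring
    have e2 : q^y * q^(m-y) = q^m := by
      rw [← pow_add, show y + (m-y) = m by omega]
    have hC : (0:ℝ) ≤ ((2*m+1).choose y : ℝ) := Nat.cast_nonneg _
    rw [mul_assoc, e, ← e2]
    apply mul_le_mul_of_nonneg_left _ hC
    apply mul_le_mul_of_nonneg_right _ (by positivity)
    exact mul_le_mul_of_nonneg_left h1 (by positivity)
  have step2 : (∑ y ∈ Finset.range (m+1), ((2*m+1).choose y : ℝ)) ≤ (2:ℝ)^(2*m+1) := by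
    have h : ∑ y ∈ Finset.range (m+1), (2*m+1).choose y
        ≤ ∑ y ∈ Finset.range (2*m+2), (2*m+1).choose y :=
      Finset.sum_le_sum_of_subset (Finset.range_subset_range.mpr (by omega))
    rw [Nat.sum_range_choose] at h
    exact_mod_cast h
  calc Spart q (2*m+1) m
      ≤ (∑ y ∈ Finset.range (m+1), ((2*m+1).choose y : ℝ)) * (q^m * (1-q)^(m+1)) := by
        rw [Finset.sum_mul]; exact step1
    _ ≤ (2:ℝ)^(2*m+1) * (q^m * (1-q)^(m+1)) :=
        mul_le_mul_of_nonneg_right step2 (by positivity)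
    _ = (4*q*(1-q))^m * (2*(1-q)) := by
        rw [pow_succ, pow_mul, mul_pow, mul_pow, pow_succ]; ring
    _ ≤ (4*q*(1-q))^m := mul_le_of_le_one_right (by positivity) (by linarith)

/-- For any prior μ with 0 < μ < q there exists an odd positive batch size K whose
incentive-compatible prior interval contains μ. -/
theorem exists_ic_batch (q : ℝ) (hq : 1 / 2 < q) (hq1 : q < 1)
    (μ : ℝ) (hμ0 : 0 < μ) (hμq : μ < q) :
    ∃ K : ℕ, Odd K ∧ 0 < K ∧ lb q K < μ ∧ μ < ub q K := by
  have hq0 : (0:ℝ) < q := by linarith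
  have hp0 : (0:ℝ) < 1 - q := by linarith
  have h1μ : (0:ℝ) < 1 - μ := by linarith
  classical
  have hr1 : 4*q*(1-q) < 1 := by nlinarith [sq_nonneg (2*q-1)]
  have hex : ∃ m, Spart q (2*m+1) m < μ := by
    obtain ⟨N, hN⟩ := exists_pow_lt_of_lt_one hμ0 hr1
    exact ⟨N, lt_of_le_of_lt (Spart_bound hq hq1 N) hN⟩
  have key : ∃ m, Spart q (2*m+1) m < μ ∧
      μ*(1-q)^2*(1 - Spart q (2*m+1) m) < (1-μ)*q^2*Spart q (2*m+1) m := by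
    refine ⟨Nat.find hex, Nat.find_spec hex, ?_⟩
    have hspec := Nat.find_spec hex
    cases hM : Nat.find hex with
    | zero =>
      have e : Spart q (2*0+1) 0 = 1 - q := by
        simp [Spart]
      rw [e]
      nlinarith [mul_pos (mul_pos hq0 hp0) (sub_pos.mpr hμq)]
    | succ k =>
      rw [hM] at hspec
      have hk : ¬ Spart q (2*k+1) k < μ := Nat.find_min hex (by omega)
      push_neg at hk
      have hstep := stepB hq hq1 k
      set b : ℝ := Spart q (2*(k+1)+1) (k+1) with hb
      have h1 : (0:ℝ) < q*b - (1-q)*μ := by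
        nlinarith [mul_le_mul_of_nonneg_left hk hp0.le]
      have h2 : (0:ℝ) < (1-μ)*q^2 + μ*(1-q)^2 := by
        have := mul_pos h1μ (pow_pos hq0 2)
        have := mul_pos hμ0 (pow_pos hp0 2)
        linarith
      have h3 : (0:ℝ) < μ*(1-q)*((2*q-1)*(q-μ)) :=
        mul_pos (mul_pos hμ0 hp0) (mul_pos (by linarith) (by linarith))
      nlinarith [mul_pos h2 h1, h3, hq0]
  obtain ⟨m, hlt, hcond⟩ := key
  have hcompl := binTail_compl (q := q) (m := m)
  have hbt0 : 0 ≤ binTail q (2*m+1) := binTail_nonneg hq0 hq1 _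
  refine ⟨2*m+1, ⟨m, by ring⟩, by omega, ?_, ?_⟩
  · unfold lb
    linarith
  · unfold ub
    have hbt : binTail q (2*m+1) = 1 - Spart q (2*m+1) m := by linarith
    rw [hbt]
    set a : ℝ := Spart q (2*m+1) m with haa
    have ha1 : a ≤ 1 := by linarith
    have ha0 : 0 < a := by
      nlinarith [mul_nonneg (mul_pos hμ0 (pow_pos hp0 2)).le (show (0:ℝ) ≤ 1 - a by linarith),
        mul_pos h1μ (pow_pos hq0 2)]
    have e : 1 - (1 - a) = a := by ring
    rw [e]
    have hD : 0 < q^2*a + (1-q)^2*(1-a) := by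
      have h1 := mul_pos (pow_pos hq0 2) ha0
      have h2 : 0 ≤ (1-q)^2*(1-a) := mul_nonneg (sq_nonneg _) (by linarith)
      linarith
    rw [lt_div_iff₀ hD]
    nlinarith [hcond]
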